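/- arXiv:2311.07851 — 4 statements merged into one kernel-verified Lean document; each statement's English description precedes it below -/
import Mathlib

section
/- For every natural number n and positive integer r, the sum over i = 1 to n of i * binomial(n-i+r-1, 2r-1) equals binomial(n+r, 2r+1). -/
open Finset

lemma hockey (a k n : ℕ) (h : a ≤ k) :
    ∑ m ∈ Icc a n, m.choose k = (n + 1).choose (k + 1) := by
  rw [← Nat.sum_Icc_choose]
  exact (Finset.sum_subset (Icc_subset_Icc_left h)
    (fun x hx hx' => Nat.choose_eq_zero_of_lt (by
      simp only [mem_Icc] at hx hx'; omega))).symm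

lemma key (c k t n : ℕ) (h : c ≤ k) (ht : t ≤ n) :
    ∑ i ∈ Icc t n, (n - i + c).choose k = (n - t + c + 1).choose (k + 1) := by
  rw [← Finset.Ico_add_one_right_eq_Icc, Finset.sum_Ico_eq_sum_range]
  have h1 : n + 1 - t = (n - t) + 1 := by omega
  rw [h1]
  have h2 : ∀ j ∈ range (n - t + 1), (n - (t + j) + c).choose k
      = (fun j => (j + c).choose k) (n - t + 1 - 1 - j) := by
    intro j hj; simp only [mem_range] at hj
    congr 2; omega
  rw [Finset.sum_congr rfl h2,
    Finset.sum_range_reflect (fun j => (j + c).choose k) (n - t + 1)]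
  have h3 : ∀ j ∈ range (n - t + 1), (j + c).choose k = (c + j).choose k := by
    intro j _; rw [Nat.add_comm]
  have h4 := Finset.sum_Ico_eq_sum_range (fun m => m.choose k) c (c + (n - t + 1))
  rw [Nat.add_sub_cancel_left] at h4
  rw [Finset.sum_congr rfl h3, ← h4, ← Nat.add_assoc, Finset.Ico_add_one_right_eq_Icc,
    hockey c k (c + (n - t)) h]
  exact congrArg₂ Nat.choose (by omega) rfl

lemma swapIcc {M : Type*} [AddCommMonoid M] (a b : ℕ) (f : ℕ → ℕ → M) :
    (∑ i ∈ Icc a b, ∑ j ∈ Icc a i, f i j) = ∑ j ∈ Icc a b, ∑ i ∈ Icc j b, f i j := by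
  rw [Finset.sum_sigma', Finset.sum_sigma']
  refine sum_nbij' (fun x => ⟨x.2, x.1⟩) (fun x => ⟨x.2, x.1⟩) ?_ ?_ (fun _ _ => rfl)
    (fun _ _ => rfl) (fun _ _ => rfl) <;>
  simp only [mem_Icc, Sigma.forall, mem_sigma] <;>
  rintro a b ⟨⟨h₁, h₂⟩, ⟨h₃, h₄⟩⟩ <;> omega

theorem stmt_1 (n r : ℕ) (hr : 0 < r) :
    ∑ i ∈ Finset.Icc 1 n, i * (n - i + r - 1).choose (2 * r - 1)
      = (n + r).choose (2 * r + 1) := by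
  obtain ⟨s, rfl⟩ : ∃ s, r = s + 1 := ⟨r - 1, by omega⟩
  rcases Nat.eq_zero_or_pos n with rfl | hn
  · simp [Nat.choose_eq_zero_of_lt (by omega : s + 1 < 2 * (s + 1) + 1)]
  have e1 : ∀ i ∈ Icc 1 n, i * (n - i + (s + 1) - 1).choose (2 * (s + 1) - 1)
      = ∑ t ∈ Icc 1 i, (n - i + s).choose (2 * s + 1) := by
    intro i hi
    rw [Finset.sum_const, Nat.card_Icc]
    simp only [mem_Icc] at hi
    have : n - i + (s + 1) - 1 = n - i + s := by omega
    have h2 : 2 * (s + 1) - 1 = 2 * s + 1 := by omega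
    rw [this, h2, smul_eq_mul]
    have h5 : i + 1 - 1 = i := by omega
    rw [h5]
  rw [Finset.sum_congr rfl e1, swapIcc]
  have e2 : ∀ t ∈ Icc 1 n, (∑ i ∈ Icc t n, (n - i + s).choose (2 * s + 1))
      = (n - t + (s + 1)).choose (2 * s + 2) := by
    intro t ht
    simp only [mem_Icc] at ht
    rw [key s (2 * s + 1) t n (by omega) ht.2]
    exact congrArg₂ Nat.choose (by omega) (by omega)
  rw [Finset.sum_congr rfl e2]
  have := key (s + 1) (2 * s + 2) 1 n (by omega) hn
  rw [this]
  congr 1 <;> omega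
end

section
/- For every natural number n and positive integer r, the sum over i = 1 to n of i * binomial(n-i+r-1, 2r) equals binomial(n+r, 2r+2). -/
lemma hock (r : ℕ) (hr : 0 < r) (n : ℕ) :
    ∑ j ∈ Finset.range (n + 1), (j + r - 1).choose (2 * r)
      = (n + r).choose (2 * r + 1) := by
  induction n with
  | zero =>
      rw [Finset.sum_range_one, Nat.choose_eq_zero_of_lt (by omega),
        Nat.choose_eq_zero_of_lt (by omega)]
  | succ n ih =>
      rw [Finset.sum_range_succ, ih]
      have h1 : n + 1 + r - 1 = n + r := by omega
      have h2 : n + 1 + r = (n + r) + 1 := by omega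
      rw [h1, h2, Nat.choose_succ_succ']
      omega

lemma key_s2 (r : ℕ) (hr : 0 < r) (n : ℕ) :
    ∑ i ∈ Finset.range (n + 1), i * (n - i + r - 1).choose (2 * r)
      = (n + r).choose (2 * r + 2) := by
  induction n with
  | zero =>
      rw [Finset.sum_range_one, zero_mul, Nat.choose_eq_zero_of_lt (by omega)]
  | succ n ih =>
      rw [Finset.sum_range_succ']
      simp only [zero_mul, add_zero]
      have hcong : ∀ i ∈ Finset.range (n + 1),
          (i + 1) * (n + 1 - (i + 1) + r - 1).choose (2 * r)
            = i * (n - i + r - 1).choose (2 * r) + (n - i + r - 1).choose (2 * r) := by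
        intro i _
        have : n + 1 - (i + 1) = n - i := by omega
        rw [this]; ring
      rw [Finset.sum_congr rfl hcong, Finset.sum_add_distrib, ih]
      have hrefl : ∑ i ∈ Finset.range (n + 1), (n - i + r - 1).choose (2 * r)
          = (n + r).choose (2 * r + 1) := by
        rw [← hock r hr n]
        have := Finset.sum_range_reflect (fun j => (j + r - 1).choose (2 * r)) (n + 1)
        simp only [Nat.add_sub_cancel] at this
        rw [← this]
      rw [hrefl]
      have h2 : n + 1 + r = (n + r) + 1 := by omega
      rw [h2, Nat.choose_succ_succ']
      have h3 : 2 * r + 1 + 1 = 2 * r + 2 := rfl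
      rw [h3]
      omega

theorem stmt_2 (n r : ℕ) (hr : 0 < r) :
    ∑ i ∈ Finset.Icc 1 n, i * (n - i + r - 1).choose (2 * r)
      = (n + r).choose (2 * r + 2) := by
  rw [← key_s2 r hr n, Finset.sum_range_succ', zero_mul, add_zero,
    ← Finset.Ico_add_one_right_eq_Icc, Finset.sum_Ico_eq_sum_range]
  apply Finset.sum_congr rfl
  intro i _
  rw [add_comm 1 i]
end

section
/- For every natural number n and positive integer r, the sum of the products x_1 * x_2 * ... * x_r over all r-tuples of nonnegative integers (x_1,...,x_r) with x_1 + ... + x_r = n equals binomial(n+r-1, 2r-1). -/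
open Finset Finset.Nat

private lemma sum_range_choose_hockey (p n : ℕ) :
    ∑ m ∈ Finset.range (n + 1), m.choose p = (n + 1).choose (p + 1) := by
  rw [← Nat.sum_Icc_choose n p, Finset.range_eq_Ico, Finset.Ico_add_one_right_eq_Icc]
  exact (Finset.sum_subset (Finset.Icc_subset_Icc (Nat.zero_le p) le_rfl)
    (fun x hx hx' => Nat.choose_eq_zero_of_lt (by
      simp only [Finset.mem_Icc] at hx hx'; omega))).symm

private lemma conv_choose (p q : ℕ) : ∀ n : ℕ,
    ∑ ij ∈ antidiagonal n, ij.1.choose p * ij.2.choose q = (n + 1).choose (p + q + 1) := by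
  induction q with
  | zero =>
    intro n
    simp only [Nat.choose_zero_right, mul_one]
    rw [Finset.Nat.sum_antidiagonal_eq_sum_range_succ_mk]
    simpa using sum_range_choose_hockey p n
  | succ q ihq =>
    intro n
    induction n with
    | zero =>
      simp [Nat.choose_eq_zero_of_lt (show 1 < p + (q + 1) + 1 by omega)]
    | succ n ihn =>
      rw [Finset.Nat.sum_antidiagonal_succ']
      have h0 : ((n + 1, 0) : ℕ × ℕ).1.choose p * ((n + 1, 0) : ℕ × ℕ).2.choose (q + 1) = 0 := by
        simp
      rw [h0, Nat.zero_add]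
      have h1 : ∀ ij ∈ antidiagonal n, (ij.1, ij.2 + 1).1.choose p *
          (ij.1, ij.2 + 1).2.choose (q + 1)
            = ij.1.choose p * ij.2.choose q + ij.1.choose p * ij.2.choose (q + 1) := by
        intro ij _
        show ij.1.choose p * (ij.2 + 1).choose (q + 1) = _
        rw [Nat.choose_succ_succ, Nat.mul_add]
      rw [Finset.sum_congr rfl h1, Finset.sum_add_distrib, ihq n, ihn,
        show p + (q + 1) + 1 = (p + q + 1) + 1 by omega]
      exact (Nat.choose_succ_succ (n + 1) (p + q + 1)).symm

private lemma conv_choose_shift (p q : ℕ) : ∀ c : ℕ, c ≤ q → ∀ n : ℕ,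
    ∑ ij ∈ antidiagonal n, ij.1.choose p * (ij.2 + c).choose q
      = (n + c + 1).choose (p + q + 1) := by
  intro c
  induction c with
  | zero => intro _ n; simpa using conv_choose p q n
  | succ c ihc =>
    intro hc n
    have h1 : ∑ ij ∈ antidiagonal (n + 1), ij.1.choose p * (ij.2 + c).choose q
        = ∑ ij ∈ antidiagonal n, ij.1.choose p * (ij.2 + (c + 1)).choose q := by
      rw [Finset.Nat.sum_antidiagonal_succ']
      have h0 : ((n + 1, 0) : ℕ × ℕ).1.choose p * (((n + 1, 0) : ℕ × ℕ).2 + c).choose q = 0 := by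
        show (n + 1).choose p * (0 + c).choose q = 0
        rw [Nat.zero_add, Nat.choose_eq_zero_of_lt (show c < q by omega), Nat.mul_zero]
      rw [h0, Nat.zero_add]
      apply Finset.sum_congr rfl
      intro ij _
      show ij.1.choose p * (ij.2 + 1 + c).choose q = _
      rw [show ij.2 + 1 + c = ij.2 + (c + 1) by omega]
    rw [← h1, ihc (by omega) (n + 1), show n + 1 + c + 1 = n + (c + 1) + 1 by omega]

private lemma sum_antidiagonalTuple_succ {M : Type*} [AddCommMonoid M] (k n : ℕ)
    (f : (Fin (k + 1) → ℕ) → M) :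
    ∑ x ∈ Finset.Nat.antidiagonalTuple (k + 1) n, f x
      = ∑ p ∈ antidiagonal n, ∑ y ∈ Finset.Nat.antidiagonalTuple k p.2, f (Fin.cons p.1 y) := by
  refine Eq.trans ?_ (Finset.sum_sigma (antidiagonal n)
    (fun p => Finset.Nat.antidiagonalTuple k p.2)
    (fun q : (_ : ℕ × ℕ) × (Fin k → ℕ) => f (Fin.cons q.1.1 q.2)))
  refine Finset.sum_bij' (fun x _ => (⟨(x 0, n - x 0), Fin.tail x⟩ :
      (_ : ℕ × ℕ) × (Fin k → ℕ))) (fun q _ => Fin.cons q.1.1 q.2) ?_ ?_ ?_ ?_ ?_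
  · intro x hx
    simp only [Finset.Nat.mem_antidiagonalTuple] at hx
    have h := Fin.sum_univ_succ x
    rw [hx] at h
    simp only [Finset.mem_sigma, Finset.HasAntidiagonal.mem_antidiagonal,
      Finset.Nat.mem_antidiagonalTuple, Fin.tail]
    omega
  · rintro ⟨⟨a, b⟩, y⟩ hq
    simp only [Finset.mem_sigma, Finset.HasAntidiagonal.mem_antidiagonal,
      Finset.Nat.mem_antidiagonalTuple] at hq ⊢
    rw [Fin.sum_cons, hq.2, hq.1]
  · intro x _
    exact Fin.cons_self_tail x
  · rintro ⟨⟨a, b⟩, y⟩ hq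
    simp only [Finset.mem_sigma, Finset.HasAntidiagonal.mem_antidiagonal,
      Finset.Nat.mem_antidiagonalTuple] at hq
    simp only [Fin.cons_zero, Fin.tail_cons]
    rw [show n - a = b by omega]
  · intro x _
    rw [Fin.cons_self_tail x]

private lemma key_lemma (s : ℕ) : ∀ n : ℕ,
    ∑ x ∈ Finset.Nat.antidiagonalTuple (s + 1) n, ∏ i, x i = (n + s).choose (2 * s + 1) := by
  induction s with
  | zero =>
    intro n
    rw [Finset.Nat.antidiagonalTuple_one]
    simp
  | succ s ihs =>
    intro n
    rw [sum_antidiagonalTuple_succ]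
    have step : ∀ p ∈ antidiagonal n,
        (∑ y ∈ Finset.Nat.antidiagonalTuple (s + 1) p.2, ∏ i, Fin.cons p.1 y i)
          = p.1.choose 1 * (p.2 + s).choose (2 * s + 1) := by
      intro p _
      simp only [Fin.prod_cons]
      rw [← Finset.mul_sum, ihs p.2, Nat.choose_one_right]
    rw [Finset.sum_congr rfl step, conv_choose_shift 1 (2 * s + 1) s (by omega) n,
      show 1 + (2 * s + 1) + 1 = 2 * (s + 1) + 1 by omega,
      show n + s + 1 = n + (s + 1) by omega]

theorem stmt_3 (n r : ℕ) (hr : 0 < r) :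
    ∑ x ∈ Finset.Nat.antidiagonalTuple r n, ∏ i, x i
      = (n + r - 1).choose (2 * r - 1) := by
  obtain ⟨s, rfl⟩ : ∃ s, r = s + 1 := ⟨r - 1, by omega⟩
  rw [key_lemma s n, show n + (s + 1) - 1 = n + s by omega,
    show 2 * (s + 1) - 1 = 2 * s + 1 by omega]
end

section
/- Suppose (p_0, β_+, β_-) ∈ (0,1)^3 satisfies the system: p_0[1 + β_+/(1-β_+)^2 + β_- /(1-β_-)] = 1, p_0[(β_+^2+β_+)/(1-β_+)^3 - β_- /(1-β_-)^2] = μ, and p_0 β_- /(1-β_-)^2 = μν, for positive reals μ, ν. Then β_+ satisfies the quartic equation c_4 β_+^4 + c_3 β_+^3 + c_2 β_+^2 + c_1 β_+ + c_0 = 0 with c_0 = 1 - ν/(1+ν) - 1/(μ(1+ν)), c_1 = 1/(μ²(1+ν)²) + 2ν/(1+ν) - 3, c_2 = 2/(μ²(1+ν)²) + 4, c_3 = 1/(μ²(1+ν)²) - 2ν/(1+ν) - 3, c_4 = 1/(μ(1+ν)) + ν/(1+ν) + 1. -/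
/-- If `(p₀, β₊, β₋) ∈ (0,1)³` satisfies the normalization, mean and debt constraints
for the equilibrium distribution, then `β₊` satisfies the quartic equation
`c₄β₊⁴ + c₃β₊³ + c₂β₊² + c₁β₊ + c₀ = 0` with the stated coefficients. -/
theorem stmt_17 (μ ν p0 βp βm : ℝ) (hμ : 0 < μ) (hν : 0 < ν)
    (hp0 : 0 < p0) (hp0' : p0 < 1) (hβp0 : 0 < βp) (hβp1 : βp < 1)
    (hβm0 : 0 < βm) (hβm1 : βm < 1)
    (h1 : p0 * (1 + βp / (1 - βp) ^ 2 + βm / (1 - βm)) = 1)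
    (h2 : p0 * ((βp ^ 2 + βp) / (1 - βp) ^ 3 - βm / (1 - βm) ^ 2) = μ)
    (h3 : p0 * (βm / (1 - βm) ^ 2) = μ * ν) :
    (1 / (μ * (1 + ν)) + ν / (1 + ν) + 1) * βp ^ 4
      + (1 / (μ ^ 2 * (1 + ν) ^ 2) - 2 * ν / (1 + ν) - 3) * βp ^ 3
      + (2 / (μ ^ 2 * (1 + ν) ^ 2) + 4) * βp ^ 2
      + (1 / (μ ^ 2 * (1 + ν) ^ 2) + 2 * ν / (1 + ν) - 3) * βp
      + (1 - ν / (1 + ν) - 1 / (μ * (1 + ν))) = 0 := by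
  have hd : (1 : ℝ) - βp ≠ 0 := by linarith
  have he : (1 : ℝ) - βm ≠ 0 := by linarith
  have hμn : μ ≠ 0 := ne_of_gt hμ
  have hνn : (1 : ℝ) + ν ≠ 0 := by linarith
  -- atoms
  set x : ℝ := βm / (1 - βm) with hxdef
  set A : ℝ := βp / (1 - βp) ^ 2 with hAdef
  have hx1 : p0 * x = 1 - p0 - p0 * A := by linear_combination h1
  have hxid : βm / (1 - βm) ^ 2 = x + x ^ 2 := by
    rw [hxdef]; field_simp; ring
  have hx2 : p0 * (x + x ^ 2) = μ * ν := by rw [← hxid]; exact h3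
  have hx3 : p0 * ((βp ^ 2 + βp) / (1 - βp) ^ 3) = μ * (1 + ν) := by
    linear_combination h2 + h3
  -- key quadratic relation with divisions hidden in atom A
  have E1 : (1 - p0 - p0 * A) ^ 2 + p0 * (1 - p0 - p0 * A) = μ * ν * p0 := by
    rw [← hx1]; linear_combination p0 * hx2
  have hA : A * (1 - βp) ^ 2 = βp := by rw [hAdef]; field_simp
  have e4 : p0 * (βp ^ 2 + βp) = μ * (1 + ν) * (1 - βp) ^ 3 := by
    have h := hx3
    rw [hAdef] at *
    field_simp at h
    linear_combination h
  have e5 : p0 * A * (βp ^ 2 + βp) = μ * (1 + ν) * (1 - βp) * βp := by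
    linear_combination A * e4 + μ * (1 + ν) * (1 - βp) * hA
  -- fully polynomial key relation in μ, ν, βp only
  have keyP : ((βp ^ 2 + βp) - μ * (1 + ν) * (1 - βp) ^ 3 - μ * (1 + ν) * (1 - βp) * βp) ^ 2
      + μ * (1 + ν) * (1 - βp) ^ 3 *
        ((βp ^ 2 + βp) - μ * (1 + ν) * (1 - βp) ^ 3 - μ * (1 + ν) * (1 - βp) * βp)
      = μ * ν * (μ * (1 + ν) * (1 - βp) ^ 3) * (βp ^ 2 + βp) := by
    rw [← e4, ← e5]
    linear_combination (βp ^ 2 + βp) ^ 2 * E1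
  set w : ℝ := 1 / (μ * (1 + ν)) with hwdef
  have hw : w * (μ * (1 + ν)) = 1 := by
    rw [hwdef]; field_simp
  have hww : 1 / (μ ^ 2 * (1 + ν) ^ 2) = w ^ 2 := by
    rw [hwdef]; field_simp
  have hnu2 : 2 * ν / (1 + ν) = 2 * (μ * ν * w) := by
    rw [hwdef]; field_simp
  have hnu : ν / (1 + ν) = μ * ν * w := by
    rw [hwdef]; field_simp
  have hww2 : 2 / (μ ^ 2 * (1 + ν) ^ 2) = 2 * w ^ 2 := by
    rw [hwdef]; field_simp
  clear_value w
  rw [hww2, hww, hnu2, hnu]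
  have hbn : βp ≠ 0 := ne_of_gt hβp0
  have hMb : ((μ * (1 + ν)) ^ 2 * βp) ≠ 0 :=
    mul_ne_zero (pow_ne_zero 2 (mul_ne_zero hμn hνn)) hbn
  refine mul_left_cancel₀ hMb ?_
  linear_combination ((μ * (1 + ν)) ^ 2 * w ^ 2) * keyP
    - (βp * (μ * (1 + ν)) ^ 2 *
        (((1 + μ * ν) * βp ^ 4 - 2 * μ * ν * βp ^ 3 + 2 * μ * ν * βp - (1 + μ * ν)) * w
          + (βp ^ 4 - 3 * βp ^ 3 + 4 * βp ^ 2 - 3 * βp + 1) * (1 + μ * (1 + ν) * w))) * hw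
end
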